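/- For every integer m > 1, the Frobenius number of the numerical semigroup ⟨(4m+2)², (4m+3)², (4m+4)², (4m+5)²⟩ equals 80m³ + 168m² + 105m + 14. -/
import Mathlib


/-- Target: value `q*n² + (2un+v)` is represented and under budget. -/
def CoverP (m u v : ℤ) : Prop :=
  ∃ b c d q : ℤ, 0 ≤ b ∧ 0 ≤ c ∧ 0 ≤ d ∧ 0 ≤ q ∧
    b*(4*m+3)^2 + c*(4*m+4)^2 + d*(4*m+5)^2 = q*(4*m+2)^2 + (2*u*(4*m+2) + v) ∧
    q*(4*m+2)^2 + (2*u*(4*m+2) + v) ≤ 80*m^3+184*m^2+121*m+18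

lemma cov_A1 (m u c : ℤ) (hm : 2 ≤ m) (hc : 0 ≤ c) (h2 : 2*c ≤ u) (hu : u ≤ 4*m+1) :
    CoverP m u (u+2*c) := by
  refine ⟨u-2*c, c, 0, u-c, by omega, hc, le_refl 0, by omega, by ring, ?_⟩
  nlinarith [mul_nonneg (show (0:ℤ) ≤ 4*m+1-(u-c) by omega)
      (show (0:ℤ) ≤ (4*m+2)^2 by positivity),
    mul_nonneg (show (0:ℤ) ≤ 4*m+1-u by omega) (show (0:ℤ) ≤ 8*m+4 by linarith)]

lemma cov_A2_0 (m k c : ℤ) (hm : 2 ≤ m) (hk : 0 ≤ k) (hc : 0 ≤ c)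
    (hu : 3*k+2*c ≤ 4*m+1) : CoverP m (3*k+2*c) (9*k+4*c) := by
  refine ⟨0, c, k, c+k, le_refl 0, hc, hk, by omega, by ring, ?_⟩
  nlinarith [mul_nonneg (show (0:ℤ) ≤ 2*m-(c+k) by omega)
      (show (0:ℤ) ≤ (4*m+2)^2 by positivity),
    mul_nonneg (show (0:ℤ) ≤ 4*m+1-(3*k+2*c) by omega) (show (0:ℤ) ≤ 8*m+4 by linarith)]

lemma cov_A2_1 (m k c : ℤ) (hm : 2 ≤ m) (hk : 0 ≤ k) (hc : 0 ≤ c)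
    (hu : 3*k+2*c+5 ≤ 4*m+1) : CoverP m (3*k+2*c+5) (9*k+4*c+11) := by
  refine ⟨2, c, k+1, c+k+3, by omega, hc, by omega, by omega, by ring, ?_⟩
  nlinarith [mul_nonneg (show (0:ℤ) ≤ 2*m+1-(c+k+3) by omega)
      (show (0:ℤ) ≤ (4*m+2)^2 by positivity),
    mul_nonneg (show (0:ℤ) ≤ 4*m+1-(3*k+2*c+5) by omega) (show (0:ℤ) ≤ 8*m+4 by linarith)]

lemma cov_A2_2 (m k c : ℤ) (hm : 2 ≤ m) (hk : 0 ≤ k) (hc : 0 ≤ c)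
    (hu : 3*k+2*c+4 ≤ 4*m+1) : CoverP m (3*k+2*c+4) (9*k+4*c+10) := by
  refine ⟨1, c, k+1, c+k+2, by omega, hc, by omega, by omega, by ring, ?_⟩
  nlinarith [mul_nonneg (show (0:ℤ) ≤ 2*m+1-(c+k+2) by omega)
      (show (0:ℤ) ≤ (4*m+2)^2 by positivity),
    mul_nonneg (show (0:ℤ) ≤ 4*m+1-(3*k+2*c+4) by omega) (show (0:ℤ) ≤ 8*m+4 by linarith)]

lemma cov_D1 (m u j : ℤ) (hm : 2 ≤ m) (hj : 0 ≤ j) (hu0 : 0 ≤ u) (hu : u ≤ 4*m+1)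
    (hb : 2*j ≤ u+4*m) (hv : u+2*j ≤ 8*m+3)
    (hcase : (j = u-1 ∧ u ≤ 3*m) ∨ u ≤ j) : CoverP m u (u+2*j) := by
  refine ⟨u+4*m-2*j, j+m+1, 0, u+5*m+4-j, by omega, by omega, le_refl 0, by omega,
    by ring, ?_⟩
  rcases hcase with ⟨rfl, h3m⟩ | hju
  · nlinarith [mul_nonneg (show (0:ℤ) ≤ 3*m-u by omega) (show (0:ℤ) ≤ 8*m+7 by linarith)]
  · nlinarith [mul_nonneg (show (0:ℤ) ≤ j-u by omega)
      (show (0:ℤ) ≤ (4*m+2)^2-2 by nlinarith),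
    mul_nonneg (show (0:ℤ) ≤ 8*m+3-3*u by omega) (show (0:ℤ) ≤ 8*m+7 by linarith)]

lemma cov_D2_0 (m k c : ℤ) (hm : 2 ≤ m) (hk : 0 ≤ k) (hc : 0 ≤ c)
    (hu0 : 0 ≤ 3*k+2*c-6*m-2) (hu : 3*k+2*c-6*m-2 ≤ 4*m+1)
    (hv : 9*k+4*c-8*m-4 ≤ 8*m+3) :
    CoverP m (3*k+2*c-6*m-2) (9*k+4*c-8*m-4) := by
  refine ⟨0, c, k, c+k+3, le_refl 0, hc, hk, by omega, by ring, ?_⟩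
  nlinarith [mul_nonneg (show (0:ℤ) ≤ 4*m+4-(c+k+3) by omega)
      (show (0:ℤ) ≤ (4*m+2)^2 by positivity),
    mul_nonneg (show (0:ℤ) ≤ 4*m+1-(3*k+2*c-6*m-2) by omega)
      (show (0:ℤ) ≤ 8*m+4 by linarith)]

lemma cov_D2_1 (m k c : ℤ) (hm : 2 ≤ m) (hk : 0 ≤ k) (hc : 0 ≤ c)
    (hu0 : 0 ≤ 3*k+2*c-6*m+3) (hu : 3*k+2*c-6*m+3 ≤ 4*m+1)
    (hv : 9*k+4*c-8*m+7 ≤ 8*m+3) :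
    CoverP m (3*k+2*c-6*m+3) (9*k+4*c-8*m+7) := by
  refine ⟨2, c, k+1, c+k+6, by omega, hc, by omega, by omega, by ring, ?_⟩
  nlinarith [mul_nonneg (show (0:ℤ) ≤ 4*m+5-(c+k+6) by omega)
      (show (0:ℤ) ≤ (4*m+2)^2 by positivity),
    mul_nonneg (show (0:ℤ) ≤ 4*m+1-(3*k+2*c-6*m+3) by omega)
      (show (0:ℤ) ≤ 8*m+4 by linarith)]

lemma cov_D2_2 (m k c : ℤ) (hm : 2 ≤ m) (hk : 0 ≤ k) (hc : 0 ≤ c)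
    (hu0 : 0 ≤ 3*k+2*c-6*m+2) (hu : 3*k+2*c-6*m+2 ≤ 4*m+1)
    (hv : 9*k+4*c-8*m+6 ≤ 8*m+3) :
    CoverP m (3*k+2*c-6*m+2) (9*k+4*c-8*m+6) := by
  refine ⟨1, c, k+1, c+k+5, by omega, hc, by omega, by omega, by ring, ?_⟩
  nlinarith [mul_nonneg (show (0:ℤ) ≤ 4*m+4-(c+k+5) by omega)
      (show (0:ℤ) ≤ (4*m+2)^2 by positivity),
    mul_nonneg (show (0:ℤ) ≤ 4*m+1-(3*k+2*c-6*m+2) by omega)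
      (show (0:ℤ) ≤ 8*m+4 by linarith)]

lemma cov_C (m u c : ℤ) (hm : 2 ≤ m) (hu0 : 0 ≤ u) (hc : 0 ≤ c)
    (hv : u+4*m+2+2*c ≤ 8*m+3) (hC : u+3*m-1 ≤ c) :
    CoverP m u (u+4*m+2+2*c) := by
  refine ⟨u+4*m+2-2*c, c, 0, u+4*m+4-c, by omega, hc, le_refl 0, by omega, by ring, ?_⟩
  nlinarith [mul_nonneg (show (0:ℤ) ≤ m+5-(u+4*m+4-c) by omega)
      (show (0:ℤ) ≤ (4*m+2)^2 by positivity),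
    mul_nonneg (show (0:ℤ) ≤ 4*m+1-u by omega) (show (0:ℤ) ≤ 8*m+4 by linarith)]

lemma cov_B1 (m u c : ℤ) (hm : 2 ≤ m) (hu : u ≤ 4*m+1) (hc : 0 ≤ c)
    (hv0 : 0 ≤ u+2*c-6*m-4) (h2 : 2*c ≤ u+2*m) :
    CoverP m u (u+2*c-6*m-4) := by
  refine ⟨u-2*c+2*m, c, 0, u-c+2*m+1, by omega, hc, le_refl 0, by omega, by ring, ?_⟩
  nlinarith [mul_nonneg (show (0:ℤ) ≤ 5*m-(u-c+2*m+1) by omega)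
      (show (0:ℤ) ≤ (4*m+2)^2 by positivity),
    mul_nonneg (show (0:ℤ) ≤ 4*m+1-u by omega) (show (0:ℤ) ≤ 8*m+4 by linarith)]

lemma cov_B2_0 (m k c : ℤ) (hm : 2 ≤ m) (hk : 0 ≤ k) (hc : 0 ≤ c)
    (hu0 : 0 ≤ 3*k+2*c-2*m) (hu : 3*k+2*c-2*m ≤ 4*m+1)
    (hv0 : 0 ≤ 9*k+4*c-8*m-4) :
    CoverP m (3*k+2*c-2*m) (9*k+4*c-8*m-4) := by
  refine ⟨0, c, k, c+k+1, le_refl 0, hc, hk, by omega, by ring, ?_⟩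
  nlinarith [mul_nonneg (show (0:ℤ) ≤ 3*m+1-(c+k+1) by omega)
      (show (0:ℤ) ≤ (4*m+2)^2 by positivity),
    mul_nonneg (show (0:ℤ) ≤ 4*m+1-(3*k+2*c-2*m) by omega)
      (show (0:ℤ) ≤ 8*m+4 by linarith)]

lemma cov_B2_1 (m k c : ℤ) (hm : 2 ≤ m) (hk : 0 ≤ k) (hc : 0 ≤ c)
    (hu0 : 0 ≤ 3*k+2*c-2*m+5) (hu : 3*k+2*c-2*m+5 ≤ 4*m+1)
    (hv0 : 0 ≤ 9*k+4*c-8*m+7) :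
    CoverP m (3*k+2*c-2*m+5) (9*k+4*c-8*m+7) := by
  refine ⟨2, c, k+1, c+k+4, by omega, hc, by omega, by omega, by ring, ?_⟩
  nlinarith [mul_nonneg (show (0:ℤ) ≤ 3*m+2-(c+k+4) by omega)
      (show (0:ℤ) ≤ (4*m+2)^2 by positivity),
    mul_nonneg (show (0:ℤ) ≤ 4*m+1-(3*k+2*c-2*m+5) by omega)
      (show (0:ℤ) ≤ 8*m+4 by linarith)]

lemma cov_B2_2 (m k c : ℤ) (hm : 2 ≤ m) (hk : 0 ≤ k) (hc : 0 ≤ c)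
    (hu0 : 0 ≤ 3*k+2*c-2*m+4) (hu : 3*k+2*c-2*m+4 ≤ 4*m+1)
    (hv0 : 0 ≤ 9*k+4*c-8*m+6) :
    CoverP m (3*k+2*c-2*m+4) (9*k+4*c-8*m+6) := by
  refine ⟨1, c, k+1, c+k+3, by omega, hc, by omega, by omega, by ring, ?_⟩
  nlinarith [mul_nonneg (show (0:ℤ) ≤ 3*m+1-(c+k+3) by omega)
      (show (0:ℤ) ≤ (4*m+2)^2 by positivity),
    mul_nonneg (show (0:ℤ) ≤ 4*m+1-(3*k+2*c-2*m+4) by omega)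
      (show (0:ℤ) ≤ 8*m+4 by linarith)]

lemma cov_E (m u c : ℤ) (hm : 2 ≤ m) (hu0 : 0 ≤ u) (hc : 0 ≤ c)
    (hv0 : 0 ≤ u+2*c-8*m-6) (hvu : u+2*c-8*m-6 ≤ u-2)
    (hcase : (c = u+3*m ∧ u ≤ m) ∨ u+3*m+1 ≤ c) :
    CoverP m u (u+2*c-8*m-6) := by
  refine ⟨u-2*c+8*m+2, c, 0, u-c+8*m+6, by omega, hc, le_refl 0, by omega, by ring, ?_⟩
  rcases hcase with ⟨rfl, hum⟩ | hcl
  · nlinarith [mul_nonneg (show (0:ℤ) ≤ m-u by omega) (show (0:ℤ) ≤ 8*m+7 by linarith)]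
  · have hum : u ≤ m+1 := by omega
    nlinarith [mul_nonneg (show (0:ℤ) ≤ c-(u+3*m+1) by omega)
        (show (0:ℤ) ≤ (4*m+2)^2-2 by nlinarith),
      mul_nonneg (show (0:ℤ) ≤ m+1-u by omega) (show (0:ℤ) ≤ 8*m+7 by linarith)]

lemma cover (m u v : ℤ) (hm : 2 ≤ m) (hu0 : 0 ≤ u) (hu : u ≤ 4*m+1)
    (hv0 : 0 ≤ v) (hv : v ≤ 8*m+3) (hp : (u+v) % 2 = 0) : CoverP m u v := by
  by_cases h1 : u ≤ v
  · -- upper half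
    by_cases h2 : v ≤ 2*u
    · obtain ⟨c, hc0, hcu, rfl⟩ : ∃ c, 0 ≤ c ∧ 2*c ≤ u ∧ v = u+2*c :=
        ⟨(v-u)/2, by omega, by omega, by omega⟩
      exact cov_A1 m u c hm hc0 hcu hu
    · -- 2u < v : A2 / D / C chain
      have hDD : 3*u-2 ≤ v → (v = 3*u-2 → u % 3 = 0) → CoverP m u v := by
        intro hg1 hg2
        by_cases h3 : v ≤ 2*u+4*m
        · obtain ⟨j, hj0, rfl⟩ : ∃ j, 0 ≤ j ∧ v = u+2*j := ⟨(v-u)/2, by omega, by omega⟩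
          refine cov_D1 m u j hm hj0 hu0 hu (by omega) (by omega) ?_
          rcases (show u ≤ j ∨ j = u-1 by omega) with h | h
          · exact Or.inr h
          · exact Or.inl ⟨h, by omega⟩
        · -- v > 2u+4m : D2 / C
          have hCC : 3*u+10*m ≤ v → CoverP m u v := by
            intro hC
            obtain ⟨c, hc0, rfl⟩ : ∃ c, 0 ≤ c ∧ v = u+4*m+2+2*c :=
              ⟨(v-u-4*m-2)/2, by omega, by omega⟩
            exact cov_C m u c hm hu0 hc0 (by omega) (by omega)
          rcases (show (v-2*u-4*m) % 3 = 0 ∨ (v-2*u-4*m) % 3 = 1 ∨ (v-2*u-4*m) % 3 = 2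
              by omega) with hs | hs | hs
          · by_cases hcnd : v ≤ 3*u+10*m+2
            · obtain ⟨k, c, hk, hc, hue, hve⟩ : ∃ k c, 0 ≤ k ∧ 0 ≤ c ∧
                  u = 3*k+2*c-6*m-2 ∧ v = 9*k+4*c-8*m-4 :=
                ⟨(v-2*u-4*m)/3, (3*u+10*m+2-v)/2, by omega, by omega, by omega, by omega⟩
              rw [hue, hve]
              exact cov_D2_0 m k c hm hk hc (by omega) (by omega) (by omega)
            · exact hCC (by omega)
          · by_cases hcnd : v ≤ 3*u+10*m-2
            · obtain ⟨k, c, hk, hc, hue, hve⟩ : ∃ k c, 0 ≤ k ∧ 0 ≤ c ∧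
                  u = 3*k+2*c-6*m+3 ∧ v = 9*k+4*c-8*m+7 :=
                ⟨(v-2*u-4*m-1)/3, (3*u+10*m-2-v)/2, by omega, by omega, by omega, by omega⟩
              rw [hue, hve]
              exact cov_D2_1 m k c hm hk hc (by omega) (by omega) (by omega)
            · exact hCC (by omega)
          · by_cases hcnd : v ≤ 3*u+10*m
            · obtain ⟨k, c, hk, hc, hue, hve⟩ : ∃ k c, 0 ≤ k ∧ 0 ≤ c ∧
                  u = 3*k+2*c-6*m+2 ∧ v = 9*k+4*c-8*m+6 :=
                ⟨(v-2*u-4*m-2)/3, (3*u+10*m-v)/2, by omega, by omega, by omega, by omega⟩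
              rw [hue, hve]
              exact cov_D2_2 m k c hm hk hc (by omega) (by omega) (by omega)
            · exact hCC (by omega)
      rcases (show (v-2*u) % 3 = 0 ∨ (v-2*u) % 3 = 1 ∨ (v-2*u) % 3 = 2 by omega)
          with hs | hs | hs
      · by_cases hcnd : v ≤ 3*u
        · obtain ⟨k, c, hk, hc, hue, hve⟩ : ∃ k c, 0 ≤ k ∧ 0 ≤ c ∧
              u = 3*k+2*c ∧ v = 9*k+4*c :=
            ⟨(v-2*u)/3, (3*u-v)/2, by omega, by omega, by omega, by omega⟩
          rw [hue, hve]
          exact cov_A2_0 m k c hm hk hc (by omega)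
        · exact hDD (by omega) (by omega)
      · by_cases hcnd : v ≤ 3*u-4
        · obtain ⟨k, c, hk, hc, hue, hve⟩ : ∃ k c, 0 ≤ k ∧ 0 ≤ c ∧
              u = 3*k+2*c+5 ∧ v = 9*k+4*c+11 :=
            ⟨(v-2*u-1)/3, (3*u-v-4)/2, by omega, by omega, by omega, by omega⟩
          rw [hue, hve]
          exact cov_A2_1 m k c hm hk hc (by omega)
        · exact hDD (by omega) (by omega)
      · by_cases hcnd : v ≤ 3*u-2
        · obtain ⟨k, c, hk, hc, hue, hve⟩ : ∃ k c, 0 ≤ k ∧ 0 ≤ c ∧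
              u = 3*k+2*c+4 ∧ v = 9*k+4*c+10 :=
            ⟨(v-2*u-2)/3, (3*u-v-2)/2, by omega, by omega, by omega, by omega⟩
          rw [hue, hve]
          exact cov_A2_2 m k c hm hk hc (by omega)
        · exact hDD (by omega) (by omega)
  · -- lower half : v ≤ u-2
    have hEE : 3*u-v ≤ 2*m+6 → (3*u-v = 2*m+6 → u ≤ m) → CoverP m u v := by
      intro hw hw6
      obtain ⟨c, hc0, rfl⟩ : ∃ c, 0 ≤ c ∧ v = u+2*c-8*m-6 :=
        ⟨(v-u+8*m+6)/2, by omega, by omega⟩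
      refine cov_E m u c hm hu0 hc0 (by omega) (by omega) ?_
      rcases (show u+3*m+1 ≤ c ∨ c = u+3*m by omega) with h | h
      · exact Or.inr h
      · exact Or.inl ⟨h, by omega⟩
    by_cases h2 : v ≤ 2*u-4*m-4
    · obtain ⟨c, hc0, rfl⟩ : ∃ c, 0 ≤ c ∧ v = u+2*c-6*m-4 :=
        ⟨(v-u+6*m+4)/2, by omega, by omega⟩
      exact cov_B1 m u c hm hu hc0 (by omega) (by omega)
    · rcases (show (v-2*u+4*m+4) % 3 = 0 ∨ (v-2*u+4*m+4) % 3 = 1 ∨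
          (v-2*u+4*m+4) % 3 = 2 by omega) with hs | hs | hs
      · by_cases hcnd : v ≤ 3*u-2*m-4
        · obtain ⟨k, c, hk, hc, hue, hve⟩ : ∃ k c, 0 ≤ k ∧ 0 ≤ c ∧
              u = 3*k+2*c-2*m ∧ v = 9*k+4*c-8*m-4 :=
            ⟨(v-2*u+4*m+4)/3, (3*u-v-2*m-4)/2, by omega, by omega, by omega, by omega⟩
          rw [hue, hve]
          exact cov_B2_0 m k c hm hk hc (by omega) (by omega) (by omega)
        · exact hEE (by omega) (by omega)
      · by_cases hcnd : v ≤ 3*u-2*m-8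
        · obtain ⟨k, c, hk, hc, hue, hve⟩ : ∃ k c, 0 ≤ k ∧ 0 ≤ c ∧
              u = 3*k+2*c-2*m+5 ∧ v = 9*k+4*c-8*m+7 :=
            ⟨(v-2*u+4*m+3)/3, (3*u-v-2*m-8)/2, by omega, by omega, by omega, by omega⟩
          rw [hue, hve]
          exact cov_B2_1 m k c hm hk hc (by omega) (by omega) (by omega)
        · exact hEE (by omega) (by omega)
      · by_cases hcnd : v ≤ 3*u-2*m-6
        · obtain ⟨k, c, hk, hc, hue, hve⟩ : ∃ k c, 0 ≤ k ∧ 0 ≤ c ∧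
              u = 3*k+2*c-2*m+4 ∧ v = 9*k+4*c-8*m+6 :=
            ⟨(v-2*u+4*m+2)/3, (3*u-v-2*m-6)/2, by omega, by omega, by omega, by omega⟩
          rw [hue, hve]
          exact cov_B2_2 m k c hm hk hc (by omega) (by omega) (by omega)
        · exact hEE (by omega) (by omega)


lemma not_rep (m a b c d : ℤ) (hm : 2 ≤ m) (ha : 0 ≤ a) (hb : 0 ≤ b) (hc : 0 ≤ c)
    (hd : 0 ≤ d) :
    a*(4*m+2)^2 + b*(4*m+3)^2 + c*(4*m+4)^2 + d*(4*m+5)^2 ≠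
      80*m^3 + 168*m^2 + 105*m + 14 := by
  intro h
  set g : ℤ := 5*m+4-(a+b+c+d) with hg
  set α : ℤ := g*(2*m+1)+3*m-(b+2*c+3*d) with hα
  have hV : b+4*c+9*d = 9*m-2+(8*m+4)*α := by
    rw [hα, hg]; linear_combination h
  obtain ⟨e, he⟩ : ∃ e : ℤ, g = α + 2*e :=
    ⟨-m*g+3*m-1+(4*m+2)*α-c-3*d, by rw [hα, hg]; linear_combination h⟩
  have hBid : b = (8*m+4)*e + 3*d + 2 - 3*m - (4*m+4)*α := by
    linear_combination -h + (4*m+2)*he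
  have hCid : 2*c = 6*m - 2 + (6*m+4)*α - (4*m+2)*e - 6*d := by
    linear_combination h - (2*m+1)*he
  have hEid : 2*a = 10*m + 6 + (2*m+2)*α - (12*m+10)*e - 2*d := by
    linear_combination h - (6*m+5)*he
  have hB' : 3*m + (4*m+4)*α ≤ (8*m+4)*e + 3*d + 2 := by linarith
  have hC' : (4*m+2)*e + 6*d ≤ 6*m - 2 + (6*m+4)*α := by linarith
  have hE' : (12*m+10)*e + 2*d ≤ 10*m+6 + (2*m+2)*α := by linarith
  have hα1 : -1 ≤ α := by
    by_contra hcon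
    push_neg at hcon
    have h2 : (8*m+4)*α ≤ (8*m+4)*(-2) :=
      mul_le_mul_of_nonneg_left (by omega) (by linarith)
    linarith
  have hD' : (2*m+4)*α - 2 ≤ (12*m+6)*e := by linarith
  have hF' : (2*m+2)*α + (20*m+22)*e ≤ 24*m+22 := by linarith
  have he0 : 0 ≤ e := by
    by_contra hcon
    push_neg at hcon
    have h2 : (12*m+6)*e ≤ (12*m+6)*(-1) :=
      mul_le_mul_of_nonneg_left (by omega) (by linarith)
    have h3 : (2*m+4)*(-1) ≤ (2*m+4)*α :=
      mul_le_mul_of_nonneg_left hα1 (by linarith)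
    linarith
  have he1 : e ≤ 1 := by
    by_contra hcon
    push_neg at hcon
    have h2 : (20*m+22)*2 ≤ (20*m+22)*e :=
      mul_le_mul_of_nonneg_left (by omega) (by linarith)
    have h3 : (2*m+2)*(-1) ≤ (2*m+2)*α :=
      mul_le_mul_of_nonneg_left hα1 (by linarith)
    linarith
  have hecase : e = 0 ∨ e = 1 := by omega
  rcases hecase with rfl | rfl
  · have hα0 : α ≤ 0 := by
      by_contra hcon
      push_neg at hcon
      have h2 : (2*m+4)*1 ≤ (2*m+4)*α :=
        mul_le_mul_of_nonneg_left (by omega) (by linarith)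
      linarith
    have : α = -1 ∨ α = 0 := by omega
    rcases this with h1 | h1 <;> rw [h1] at hB' hC' <;> ring_nf at hB' hC' <;> omega
  · have hα1' : α ≤ 1 := by
      by_contra hcon
      push_neg at hcon
      have h2 : (2*m+2)*2 ≤ (2*m+2)*α :=
        mul_le_mul_of_nonneg_left (by omega) (by linarith)
      linarith
    have : α = -1 ∨ α = 0 ∨ α = 1 := by omega
    rcases this with h1 | h1 | h1 <;> rw [h1] at hE' <;> ring_nf at hE' <;> omega


/-- The Frobenius number of `S`: the largest natural number not in `S`. -/
noncomputable def frobNum (S : AddSubmonoid ℕ) : ℕ :=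
  sSup {n : ℕ | n ∉ S}

lemma mem_closure4 (g1 g2 g3 g4 x : ℕ) :
    x ∈ AddSubmonoid.closure ({g1, g2, g3, g4} : Set ℕ) ↔
      ∃ a b c d : ℕ, x = a*g1 + b*g2 + c*g3 + d*g4 := by
  constructor
  · intro hx
    let T : AddSubmonoid ℕ :=
      { carrier := {y | ∃ a b c d : ℕ, y = a*g1 + b*g2 + c*g3 + d*g4}
        zero_mem' := ⟨0, 0, 0, 0, by ring⟩
        add_mem' := by
          rintro y z ⟨a, b, c, d, rfl⟩ ⟨a', b', c', d', rfl⟩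
          exact ⟨a+a', b+b', c+c', d+d', by ring⟩ }
    have hle : AddSubmonoid.closure ({g1, g2, g3, g4} : Set ℕ) ≤ T := by
      rw [AddSubmonoid.closure_le]
      rintro y (rfl | rfl | rfl | rfl)
      · exact ⟨1, 0, 0, 0, by ring⟩
      · exact ⟨0, 1, 0, 0, by ring⟩
      · exact ⟨0, 0, 1, 0, by ring⟩
      · exact ⟨0, 0, 0, 1, by ring⟩
    exact hle hx
  · rintro ⟨a, b, c, d, rfl⟩
    have hmul : ∀ (k g : ℕ), g ∈ AddSubmonoid.closure ({g1, g2, g3, g4} : Set ℕ) →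
        k * g ∈ AddSubmonoid.closure ({g1, g2, g3, g4} : Set ℕ) := by
      intro k g hg
      simpa [nsmul_eq_mul] using nsmul_mem hg k
    have h1 : g1 ∈ AddSubmonoid.closure ({g1, g2, g3, g4} : Set ℕ) :=
      AddSubmonoid.subset_closure (by simp)
    have h2 : g2 ∈ AddSubmonoid.closure ({g1, g2, g3, g4} : Set ℕ) :=
      AddSubmonoid.subset_closure (by simp)
    have h3 : g3 ∈ AddSubmonoid.closure ({g1, g2, g3, g4} : Set ℕ) :=
      AddSubmonoid.subset_closure (by simp)
    have h4 : g4 ∈ AddSubmonoid.closure ({g1, g2, g3, g4} : Set ℕ) :=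
      AddSubmonoid.subset_closure (by simp)
    exact add_mem (add_mem (add_mem (hmul a g1 h1) (hmul b g2 h2)) (hmul c g3 h3))
      (hmul d g4 h4)

theorem frobenius_four_consecutive_squares_4m2 (m : ℕ) (hm : 1 < m) :
    frobNum (AddSubmonoid.closure
        ({(4 * m + 2) ^ 2, (4 * m + 3) ^ 2, (4 * m + 4) ^ 2, (4 * m + 5) ^ 2} : Set ℕ)) =
      80 * m ^ 3 + 168 * m ^ 2 + 105 * m + 14 := by
  have hm2 : (2:ℤ) ≤ (m:ℤ) := by exact_mod_cast hm
  set S := AddSubmonoid.closure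
      ({(4 * m + 2) ^ 2, (4 * m + 3) ^ 2, (4 * m + 4) ^ 2, (4 * m + 5) ^ 2} : Set ℕ) with hS
  set F : ℕ := 80 * m ^ 3 + 168 * m ^ 2 + 105 * m + 14 with hF
  -- Part 2 : F is not in S
  have hFnot : F ∉ S := by
    intro hFS
    rw [hS, mem_closure4] at hFS
    obtain ⟨a, b, c, d, heq⟩ := hFS
    refine not_rep (m:ℤ) a b c d hm2 (Int.natCast_nonneg a) (Int.natCast_nonneg b)
      (Int.natCast_nonneg c) (Int.natCast_nonneg d) ?_
    rw [hF] at heq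
    exact_mod_cast heq.symm
  -- Part 1 : every N > F lies in S
  have hbig : ∀ N : ℕ, F < N → N ∈ S := by
    intro N hN
    set n : ℤ := 4*(m:ℤ)+2 with hn
    have hnpos : (0:ℤ) < n := by rw [hn]; linarith
    have hn2pos : (0:ℤ) < n^2 := by positivity
    set NZ : ℤ := (N:ℤ) with hNZdef
    have hNZ : 0 ≤ NZ := Int.natCast_nonneg N
    have hNF : (80*(m:ℤ)^3+168*(m:ℤ)^2+105*(m:ℤ)+14) < NZ := by
      rw [hNZdef]; exact_mod_cast hN
    set v : ℤ := NZ % (2*n) with hv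
    have hv0 : 0 ≤ v := Int.emod_nonneg _ (by linarith)
    have hv2 : v < 2*n := Int.emod_lt_of_pos _ (by linarith)
    set r : ℤ := NZ % n^2 with hr
    have hr0 : 0 ≤ r := Int.emod_nonneg _ (by linarith)
    have hrlt : r < n^2 := Int.emod_lt_of_pos _ hn2pos
    have hdvd : 2*n ∣ n^2 := ⟨2*(m:ℤ)+1, by rw [hn]; ring⟩
    have hrv : r % (2*n) = v := by rw [hr, hv]; exact Int.emod_emod_of_dvd _ hdvd
    set u0 : ℤ := r / (2*n) with hu0
    have hru : r = 2*n*u0 + v := by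
      rw [hu0, ← hrv]; exact (Int.mul_ediv_add_emod r (2*n)).symm
    have hu00 : 0 ≤ u0 := Int.ediv_nonneg hr0 (by linarith)
    have hn2eq : n^2 = 2*n*(2*(m:ℤ)+1) := by rw [hn]; ring
    have hu0lt : u0 ≤ 2*(m:ℤ) := by
      by_contra hcon
      push_neg at hcon
      have h1 : (2*(m:ℤ)+1) ≤ u0 := hcon
      have h2 : 2*n*(2*(m:ℤ)+1) ≤ 2*n*u0 :=
        mul_le_mul_of_nonneg_left h1 (by linarith)
      linarith
    set Q0 : ℤ := NZ / n^2 with hQ0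
    have hNQ : NZ = n^2*Q0 + r := by rw [hQ0, hr]; exact (Int.mul_ediv_add_emod _ _).symm
    have hQ00 : 0 ≤ Q0 := Int.ediv_nonneg hNZ (le_of_lt hn2pos)
    have hFn2 : n^2 ≤ 80*(m:ℤ)^3+168*(m:ℤ)^2+105*(m:ℤ)+14 := by rw [hn]; nlinarith
    obtain ⟨u, Q, hQnn, hNuv, huu0, huub, hpar⟩ :
        ∃ u Q : ℤ, 0 ≤ Q ∧ NZ = n^2*Q + (2*n*u + v) ∧ 0 ≤ u ∧ u ≤ 4*(m:ℤ)+1 ∧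
          (u+v) % 2 = 0 := by
      by_cases hpar : (u0+v) % 2 = 0
      · exact ⟨u0, Q0, hQ00, by linear_combination hNQ + hru, hu00, by omega, hpar⟩
      · have hQ01 : 1 ≤ Q0 := by
          by_contra hcon
          push_neg at hcon
          have h1 : Q0 ≤ 0 := by omega
          have h2 : n^2*Q0 ≤ n^2*0 := mul_le_mul_of_nonneg_left h1 (le_of_lt hn2pos)
          linarith
        refine ⟨u0+2*(m:ℤ)+1, Q0-1, by omega, ?_, by omega, by omega, by omega⟩
        linear_combination hNQ + hru + hn2eq
    have hv3 : v ≤ 8*(m:ℤ)+3 := by omega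
    obtain ⟨b, c, d, q, hb, hc, hd, hq, hid, hbud⟩ :=
      cover (m:ℤ) u v hm2 huu0 huub hv0 hv3 hpar
    have hbud' : q*n^2 + (2*u*n + v) ≤ 80*(m:ℤ)^3+184*(m:ℤ)^2+121*(m:ℤ)+18 := by
      rw [hn]; exact hbud
    have hid' : b*(4*(m:ℤ)+3)^2 + c*(4*(m:ℤ)+4)^2 + d*(4*(m:ℤ)+5)^2
        = q*n^2 + (2*u*n + v) := by rw [hn]; exact hid
    have haz : 0 ≤ Q - q := by
      by_contra hcon
      push_neg at hcon
      have h1 : Q - q ≤ -1 := by omega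
      have h2 : n^2*(Q-q) ≤ n^2*(-1) := mul_le_mul_of_nonneg_left h1 (le_of_lt hn2pos)
      have h3 : n^2*Q - n^2*q ≤ -n^2 := by linarith [h2]
      have hn2poly : n^2 = 16*(m:ℤ)^2+16*(m:ℤ)+4 := by rw [hn]; ring
      linarith [h3, hNuv, hbud', hn2poly, hNF]
    have key : NZ = (Q-q)*n^2 +
        (b*(4*(m:ℤ)+3)^2 + c*(4*(m:ℤ)+4)^2 + d*(4*(m:ℤ)+5)^2) := by
      linear_combination hNuv - hid'
    rw [hn] at key
    obtain ⟨a, ha⟩ : ∃ a : ℕ, (a:ℤ) = Q - q := ⟨(Q-q).toNat, Int.toNat_of_nonneg haz⟩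
    obtain ⟨b', hb'⟩ : ∃ x : ℕ, (x:ℤ) = b := ⟨b.toNat, Int.toNat_of_nonneg hb⟩
    obtain ⟨c', hc'⟩ : ∃ x : ℕ, (x:ℤ) = c := ⟨c.toNat, Int.toNat_of_nonneg hc⟩
    obtain ⟨d', hd'⟩ : ∃ x : ℕ, (x:ℤ) = d := ⟨d.toNat, Int.toNat_of_nonneg hd⟩
    rw [← ha, ← hb', ← hc', ← hd', hNZdef] at key
    have keyN : N = a*(4*m+2)^2 + (b'*(4*m+3)^2 + c'*(4*m+4)^2 + d'*(4*m+5)^2) := by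
      exact_mod_cast key
    rw [hS, mem_closure4]
    exact ⟨a, b', c', d', by linarith [keyN]⟩
  -- conclude
  have hmemF : F ∈ {k : ℕ | k ∉ S} := hFnot
  have hub : ∀ x ∈ {k : ℕ | k ∉ S}, x ≤ F := by
    intro x hx
    by_contra hcon
    push_neg at hcon
    exact hx (hbig x hcon)
  have hbdd : BddAbove {k : ℕ | k ∉ S} := ⟨F, hub⟩
  show frobNum S = F
  unfold frobNum
  exact le_antisymm (csSup_le ⟨F, hmemF⟩ hub) (le_csSup hbdd hmemF)
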